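/- arXiv:math/0507463 — 2 statements merged into one kernel-verified Lean document; each statement's English description precedes it below -/
import Mathlib

section
/- Let K be a compact convex set in ℝ² containing the origin in its interior and contained in the closed unit disk 𝔻, and suppose K contains the disk D(0, ρ) for some 0 < ρ < 1. Let G(x₀) = D(x₀/2, 1/2) with x₀ = (1,0), and let μ be the measure on the punctured unit disk with polar density ρ⁻³. Then μ(𝔻 \ K) − μ(𝔻 \ (K ∪ G(x₀))) = μ(G(x₀) \ K) ≤ μ(G(x₀) \ D(0, ρ)) ≤ C (1 − ρ)^{3/2} for an absolute constant C, uniformly for ρ ≥ 1/2. -/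
open MeasureTheory Metric

/-- The measure with polar density `ρ⁻³` on the punctured unit disk, i.e. with density
`‖x‖⁻⁴` with respect to planar Lebesgue measure on the punctured disk. -/
noncomputable def muPolarCubed : Measure (EuclideanSpace ℝ (Fin 2)) :=
  (volume.restrict {x : EuclideanSpace ℝ (Fin 2) | 0 < ‖x‖ ∧ ‖x‖ ≤ 1}).withDensity
    fun x => ENNReal.ofReal (‖x‖ ^ 4)⁻¹

/-- The disk with diameter `[0, x₀]`, `x₀ = (1,0)`. -/
noncomputable def grainX0 : Set (EuclideanSpace ℝ (Fin 2)) :=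
  closedBall ((1 / 2 : ℝ) • EuclideanSpace.single 0 1) (1 / 2)

lemma mu_le_vol {s : Set (EuclideanSpace ℝ (Fin 2))} (hs : MeasurableSet s)
    (h : ∀ x ∈ s, (1/2 : ℝ) ≤ ‖x‖) : muPolarCubed s ≤ 16 * volume s := by
  rw [muPolarCubed, withDensity_apply _ hs, Measure.restrict_restrict hs]
  calc ∫⁻ x in s ∩ {x : EuclideanSpace ℝ (Fin 2) | 0 < ‖x‖ ∧ ‖x‖ ≤ 1},
        ENNReal.ofReal (‖x‖ ^ 4)⁻¹ ∂volume
      ≤ ∫⁻ _x in s ∩ {x : EuclideanSpace ℝ (Fin 2) | 0 < ‖x‖ ∧ ‖x‖ ≤ 1}, 16 ∂volume := by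
        apply setLIntegral_mono' (hs.inter (by
          apply measurableSet_lt measurable_const measurable_norm |>.inter
          exact measurableSet_le measurable_norm measurable_const))
        intro x hx
        have h1 : (1/2 : ℝ) ≤ ‖x‖ := h x hx.1
        have h2 : (1/16 : ℝ) ≤ ‖x‖ ^ 4 := by
          have := pow_le_pow_left₀ (by norm_num : (0:ℝ) ≤ 1/2) h1 4
          norm_num at this ⊢; linarith
        have : (‖x‖ ^ 4)⁻¹ ≤ 16 := by
          rw [inv_le_comm₀ (by linarith) (by norm_num)]; linarith
        calc ENNReal.ofReal (‖x‖ ^ 4)⁻¹ ≤ ENNReal.ofReal 16 := ENNReal.ofReal_le_ofReal this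
          _ = 16 := by norm_num
    _ = 16 * volume (s ∩ {x : EuclideanSpace ℝ (Fin 2) | 0 < ‖x‖ ∧ ‖x‖ ≤ 1}) := by
        rw [setLIntegral_const, mul_comm]
    _ ≤ 16 * volume s := by gcongr; exact Set.inter_subset_left

lemma vol_box (a b c d : ℝ) :
    volume {x : EuclideanSpace ℝ (Fin 2) | x 0 ∈ Set.Icc a b ∧ x 1 ∈ Set.Icc c d}
      = ENNReal.ofReal (b - a) * ENNReal.ofReal (d - c) := by
  have key : {x : EuclideanSpace ℝ (Fin 2) | x 0 ∈ Set.Icc a b ∧ x 1 ∈ Set.Icc c d}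
      = (MeasurableEquiv.toLp 2 (Fin 2 → ℝ)).symm ⁻¹'
        (Set.univ.pi fun i : Fin 2 => if i = 0 then Set.Icc a b else Set.Icc c d) := by
    ext x
    simp only [Set.mem_preimage, Set.mem_pi, Set.mem_univ, forall_true_left, Set.mem_setOf_eq]
    constructor
    · rintro ⟨h0, h1⟩
      rw [Fin.forall_fin_two]
      constructor
      · rw [if_pos rfl]; exact h0
      · rw [if_neg (by decide)]; exact h1
    · intro h
      have h0 := h 0; rw [if_pos rfl] at h0
      have h1 := h 1; rw [if_neg (by decide)] at h1
      exact ⟨h0, h1⟩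
  rw [key, (EuclideanSpace.volume_preserving_symm_measurableEquiv_toLp (Fin 2)).measure_preimage
    (MeasurableSet.univ_pi (fun i => by split <;> exact measurableSet_Icc)).nullMeasurableSet,
    volume_pi_pi]
  simp [Fin.prod_univ_two, Real.volume_Icc]

lemma lens_mem {ρ : ℝ} (hρ : 0 ≤ ρ) {x : EuclideanSpace ℝ (Fin 2)}
    (hx : x ∈ grainX0 \ closedBall 0 ρ) :
    x 0 ∈ Set.Icc (ρ^2) 1 ∧ x 1 ∈ Set.Icc (-Real.sqrt (1 - ρ^2)) (Real.sqrt (1 - ρ^2)) := by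
  obtain ⟨hG, hB⟩ := hx
  rw [grainX0, mem_closedBall, EuclideanSpace.dist_eq, Fin.sum_univ_two] at hG
  rw [mem_closedBall, EuclideanSpace.dist_eq, Fin.sum_univ_two, not_le] at hB
  simp [Real.dist_eq, PiLp.smul_apply, EuclideanSpace.single_apply, smul_eq_mul] at hG hB
  have hG2 : (x 0 - 1/2)^2 + (x 1)^2 ≤ (1/2)^2 := by
    nlinarith [Real.sq_sqrt (by positivity : (0:ℝ) ≤ (x 0 - 2⁻¹)^2 + (x 1)^2),
      Real.sqrt_nonneg ((x 0 - 2⁻¹)^2 + (x 1)^2), hG]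
  have hB2 : ρ^2 < (x 0)^2 + (x 1)^2 := by
    nlinarith [Real.sq_sqrt (by positivity : (0:ℝ) ≤ (x 0)^2 + (x 1)^2),
      Real.sqrt_nonneg ((x 0)^2 + (x 1)^2), hB]
  have key : (x 0)^2 + (x 1)^2 ≤ x 0 := by nlinarith
  have h0lo : ρ^2 ≤ x 0 := by nlinarith
  have h0hi : x 0 ≤ 1 := by nlinarith
  have h1sq : (x 1)^2 ≤ 1 - ρ^2 := by nlinarith
  refine ⟨⟨h0lo, h0hi⟩, abs_le.mp ?_⟩
  calc |x 1| = Real.sqrt ((x 1)^2) := (Real.sqrt_sq_eq_abs _).symm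
    _ ≤ Real.sqrt (1 - ρ^2) := Real.sqrt_le_sqrt h1sq

lemma grain_subset_ball : grainX0 ⊆ closedBall (0 : EuclideanSpace ℝ (Fin 2)) 1 := by
  apply closedBall_subset_closedBall'
  rw [dist_zero_right, norm_smul]
  simp [EuclideanSpace.norm_single]
  norm_num

lemma real_key {ρ : ℝ} (h1 : 1/2 ≤ ρ) (h2 : ρ < 1) :
    16 * ((1 - ρ^2) * (2 * Real.sqrt (1 - ρ^2))) ≤ 100 * (1 - ρ) ^ ((3:ℝ)/2) := by
  set a := Real.sqrt (1 - ρ) with ha_def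
  set b := Real.sqrt (1 - ρ^2) with hb_def
  have hu : (0:ℝ) ≤ 1 - ρ := by linarith
  have hv : (0:ℝ) ≤ 1 - ρ^2 := by nlinarith
  have ha : 0 ≤ a := Real.sqrt_nonneg _
  have hb : 0 ≤ b := Real.sqrt_nonneg _
  have ha2 : a^2 = 1 - ρ := Real.sq_sqrt hu
  have hb2 : b^2 = 1 - ρ^2 := Real.sq_sqrt hv
  have hba : b^2 ≤ 2 * a^2 := by rw [ha2, hb2]; nlinarith
  have hrpow : (1 - ρ) ^ ((3:ℝ)/2) = a^3 := by
    rw [ha_def, Real.sqrt_eq_rpow, ← Real.rpow_natCast ((1-ρ) ^ ((1:ℝ)/2)) 3,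
      ← Real.rpow_mul hu]
    norm_num
  rw [hrpow, ← hb2]
  have hb15 : b ≤ (3/2) * a := by nlinarith [sq_nonneg (b - (3/2)*a), sq_nonneg (b + (3/2)*a)]
  nlinarith [mul_le_mul_of_nonneg_left hb15 (mul_nonneg hb hb), mul_nonneg ha (mul_nonneg ha ha),
    mul_le_mul_of_nonneg_right hba (mul_nonneg ha (by linarith : (0:ℝ) ≤ (3/2)))]

theorem mu_defect_of_extra_grain_bound :
    ∃ Cst : ℝ, 0 < Cst ∧ ∀ ρ : ℝ, 1 / 2 ≤ ρ → ρ < 1 →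
      ∀ K : Set (EuclideanSpace ℝ (Fin 2)), IsCompact K → Convex ℝ K →
        (0 : EuclideanSpace ℝ (Fin 2)) ∈ interior K →
        K ⊆ closedBall 0 1 → closedBall 0 ρ ⊆ K →
        muPolarCubed (closedBall 0 1 \ K) -
            muPolarCubed (closedBall 0 1 \ (K ∪ grainX0)) = muPolarCubed (grainX0 \ K) ∧
        muPolarCubed (grainX0 \ K) ≤ muPolarCubed (grainX0 \ closedBall 0 ρ) ∧
        muPolarCubed (grainX0 \ closedBall 0 ρ)
          ≤ ENNReal.ofReal (Cst * (1 - ρ) ^ ((3 : ℝ) / 2)) := by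
  refine ⟨100, by norm_num, fun ρ hρhalf hρ1 K hKc _hKconv _hK0 _hK1 hρK => ?_⟩
  have hρ0 : (0:ℝ) ≤ ρ := by linarith
  have hKm : MeasurableSet K := hKc.isClosed.measurableSet
  have hGm : MeasurableSet grainX0 := measurableSet_closedBall
  -- any point not in K has norm > ρ ≥ 1/2
  have hnotK : ∀ x : EuclideanSpace ℝ (Fin 2), x ∉ K → (1/2:ℝ) ≤ ‖x‖ := by
    intro x hx
    by_contra hlt
    exact hx (hρK (by
      rw [mem_closedBall, dist_zero_right]; push_neg at hlt; linarith))
  -- part 1 : decomposition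
  have hsplit : closedBall (0 : EuclideanSpace ℝ (Fin 2)) 1 \ K
      = (closedBall 0 1 \ (K ∪ grainX0)) ∪ (grainX0 \ K) := by
    ext x
    constructor
    · rintro ⟨hx1, hxK⟩
      by_cases hg : x ∈ grainX0
      · exact Or.inr ⟨hg, hxK⟩
      · exact Or.inl ⟨hx1, fun h => h.elim hxK hg⟩
    · rintro (⟨hx1, hx2⟩ | ⟨hg, hxK⟩)
      · exact ⟨hx1, fun h => hx2 (Or.inl h)⟩
      · exact ⟨grain_subset_ball hg, hxK⟩
  have hdisj : Disjoint (closedBall (0 : EuclideanSpace ℝ (Fin 2)) 1 \ (K ∪ grainX0))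
      (grainX0 \ K) := by
    rw [Set.disjoint_left]
    rintro x ⟨_, hx2⟩ ⟨hg, _⟩
    exact hx2 (Or.inr hg)
  have hABm : MeasurableSet (grainX0 \ K) := hGm.diff hKm
  have hAfin : muPolarCubed (closedBall (0 : EuclideanSpace ℝ (Fin 2)) 1 \ (K ∪ grainX0)) ≠ ⊤ := by
    have hm : MeasurableSet (closedBall (0 : EuclideanSpace ℝ (Fin 2)) 1 \ (K ∪ grainX0)) :=
      measurableSet_closedBall.diff (hKm.union hGm)
    have h1 := mu_le_vol hm (fun x hx => hnotK x (fun h => hx.2 (Or.inl h)))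
    have h2 : volume (closedBall (0 : EuclideanSpace ℝ (Fin 2)) 1 \ (K ∪ grainX0)) < ⊤ :=
      lt_of_le_of_lt (measure_mono Set.diff_subset) measure_closedBall_lt_top
    exact ne_top_of_le_ne_top (by
      exact ENNReal.mul_ne_top (by norm_num) h2.ne) h1
  have part1 : muPolarCubed (closedBall 0 1 \ K) -
      muPolarCubed (closedBall 0 1 \ (K ∪ grainX0)) = muPolarCubed (grainX0 \ K) := by
    rw [hsplit, measure_union hdisj hABm, ENNReal.add_sub_cancel_left hAfin]
  -- part 2
  have part2 : muPolarCubed (grainX0 \ K) ≤ muPolarCubed (grainX0 \ closedBall 0 ρ) :=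
    measure_mono (Set.diff_subset_diff_right hρK)
  -- part 3
  refine ⟨part1, part2, ?_⟩
  have hLm : MeasurableSet (grainX0 \ closedBall (0 : EuclideanSpace ℝ (Fin 2)) ρ) :=
    hGm.diff measurableSet_closedBall
  have hLsub : grainX0 \ closedBall (0 : EuclideanSpace ℝ (Fin 2)) ρ
      ⊆ {x : EuclideanSpace ℝ (Fin 2) | x 0 ∈ Set.Icc (ρ^2) 1 ∧
          x 1 ∈ Set.Icc (-Real.sqrt (1 - ρ^2)) (Real.sqrt (1 - ρ^2))} :=
    fun x hx => lens_mem hρ0 hx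
  have hnotB : ∀ x : EuclideanSpace ℝ (Fin 2), x ∉ closedBall 0 ρ → (1/2:ℝ) ≤ ‖x‖ := by
    intro x hx
    rw [mem_closedBall, dist_zero_right, not_le] at hx; linarith
  have h1 := mu_le_vol hLm (fun x hx => hnotB x hx.2)
  have hvnn : (0:ℝ) ≤ 1 - ρ^2 := by nlinarith
  have h2 : volume (grainX0 \ closedBall (0 : EuclideanSpace ℝ (Fin 2)) ρ)
      ≤ ENNReal.ofReal (1 - ρ^2) * ENNReal.ofReal (2 * Real.sqrt (1 - ρ^2)) := by
    calc volume (grainX0 \ closedBall (0 : EuclideanSpace ℝ (Fin 2)) ρ)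
        ≤ volume {x : EuclideanSpace ℝ (Fin 2) | x 0 ∈ Set.Icc (ρ^2) 1 ∧
            x 1 ∈ Set.Icc (-Real.sqrt (1 - ρ^2)) (Real.sqrt (1 - ρ^2))} := measure_mono hLsub
      _ = ENNReal.ofReal (1 - ρ^2) * ENNReal.ofReal (2 * Real.sqrt (1 - ρ^2)) := by
          rw [vol_box]; ring_nf
  calc muPolarCubed (grainX0 \ closedBall (0 : EuclideanSpace ℝ (Fin 2)) ρ)
      ≤ 16 * volume (grainX0 \ closedBall (0 : EuclideanSpace ℝ (Fin 2)) ρ) := h1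
    _ ≤ 16 * (ENNReal.ofReal (1 - ρ^2) * ENNReal.ofReal (2 * Real.sqrt (1 - ρ^2))) := by
        gcongr
    _ = ENNReal.ofReal (16 * ((1 - ρ^2) * (2 * Real.sqrt (1 - ρ^2)))) := by
        rw [ENNReal.ofReal_mul (by norm_num : (0:ℝ) ≤ 16),
          ENNReal.ofReal_mul hvnn]
        norm_num
    _ ≤ ENNReal.ofReal (100 * (1 - ρ) ^ ((3:ℝ)/2)) :=
        ENNReal.ofReal_le_ofReal (real_key hρhalf hρ1)
end

section
/- Let D₁, D₂, D₃, D₄ be the open unit disks centered at (1,0), (−1,0), (0,1), (0,−1), let ℱ = D₁ ∪ D₂ ∪ D₃ ∪ D₄, and let α > 1. Suppose S ⊂ ℝ² \ {0} is a locally finite set of points intersecting each of the four connected components of the set of points of αℱ belonging to exactly two of the disks αD_i. Then the convex polygon ⋂_{x ∈ S} H(x), where H(x) = {y : ⟨y − x, x⟩ ≤ 0}, is bounded, and the number of its edges is at most the number of points of S ∩ αℱ. -/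
open RealInnerProductSpace Metric Pointwise

private lemma inner2 (x y : EuclideanSpace ℝ (Fin 2)) : ⟪x, y⟫ = x 0 * y 0 + x 1 * y 1 := by
  simp [PiLp.inner_apply, RCLike.inner_apply, Fin.sum_univ_two]; ring

private lemma normsq2 (x : EuclideanSpace ℝ (Fin 2)) : ‖x‖^2 = x 0^2 + x 1^2 := by
  rw [← real_inner_self_eq_norm_sq, inner2]; ring

private lemma mem_ball_through_zero (m z : EuclideanSpace ℝ (Fin 2)) :
    z ∈ ball m ‖m‖ ↔ ‖z‖^2 < 2 * ⟪z, m⟫ := by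
  rw [mem_ball, dist_eq_norm, ← pow_lt_pow_iff_left₀ (norm_nonneg _) (norm_nonneg _) two_ne_zero,
    norm_sub_sq_real]
  constructor <;> intro h <;> linarith

private lemma ncard_pair_of {P : Fin 4 → Prop} {i j : Fin 4} (hij : i ≠ j) (hi : P i) (hj : P j)
    (hother : ∀ k, P k → k = i ∨ k = j) : {k | P k}.ncard = 2 := by
  have h : {k | P k} = {i, j} := by
    ext k
    constructor
    · exact hother k
    · rintro (rfl | rfl) <;> assumption
  rw [h, Set.ncard_pair hij]

private lemma pair_of_ncard {P : Fin 4 → Prop} (h : {k | P k}.ncard = 2) {i j : Fin 4}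
    (hij : i ≠ j) (hsub : ∀ k, P k → k = i ∨ k = j) : P i ∧ P j := by
  have hsub' : {k | P k} ⊆ {i, j} := fun k hk => hsub k hk
  have heq : {k | P k} = {i, j} :=
    Set.eq_of_subset_of_ncard_le hsub' (by rw [h, Set.ncard_pair hij]) (Set.toFinite _)
  exact ⟨heq.ge (Set.mem_insert _ _), heq.ge (Set.mem_insert_of_mem _ rfl)⟩

set_option maxHeartbeats 2000000 in
theorem zuyev_edge_bound
    (α : ℝ) (hα : 1 < α)
    (S : Set (EuclideanSpace ℝ (Fin 2))) (hS0 : (0 : EuclideanSpace ℝ (Fin 2)) ∉ S)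
    (hloc : ∀ x : EuclideanSpace ℝ (Fin 2), ∃ U ∈ nhds x, (S ∩ U).Finite)
    (c : Fin 4 → EuclideanSpace ℝ (Fin 2))
    (hc0 : c 0 = EuclideanSpace.single 0 1) (hc1 : c 1 = EuclideanSpace.single 0 (-1))
    (hc2 : c 2 = EuclideanSpace.single 1 1) (hc3 : c 3 = EuclideanSpace.single 1 (-1))
    (F : Set (EuclideanSpace ℝ (Fin 2))) (hF : F = ⋃ i, ball (c i) 1)
    (I2 : Set (EuclideanSpace ℝ (Fin 2)))
    (hI2 : I2 = {y | {i : Fin 4 | y ∈ ball (c i) 1}.ncard = 2})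
    (hhit : ∀ y ∈ α • I2, (S ∩ connectedComponentIn (α • I2) y).Nonempty)
    (H : EuclideanSpace ℝ (Fin 2) → Set (EuclideanSpace ℝ (Fin 2)))
    (hH : ∀ x, H x = {y | ⟪y - x, x⟫ ≤ 0}) :
    Bornology.IsBounded (⋂ x ∈ S, H x) ∧
    ∀ x ∈ S, (⋂ x' ∈ S \ {x}, H x') ≠ (⋂ x' ∈ S, H x') → x ∈ α • F := by
  classical
  have hα0 : (0:ℝ) < α := by linarith
  have hαne : α ≠ 0 := ne_of_gt hα0
  have hfin : ∀ k : Fin 4, k = 0 ∨ k = 1 ∨ k = 2 ∨ k = 3 := by decide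
  -- inner products with the centers
  have hip0 : ∀ z : EuclideanSpace ℝ (Fin 2), ⟪z, c 0⟫ = z 0 := by
    intro z; rw [hc0, EuclideanSpace.inner_single_right]; simp
  have hip1 : ∀ z : EuclideanSpace ℝ (Fin 2), ⟪z, c 1⟫ = -(z 0) := by
    intro z; rw [hc1, EuclideanSpace.inner_single_right]; simp
  have hip2 : ∀ z : EuclideanSpace ℝ (Fin 2), ⟪z, c 2⟫ = z 1 := by
    intro z; rw [hc2, EuclideanSpace.inner_single_right]; simp
  have hip3 : ∀ z : EuclideanSpace ℝ (Fin 2), ⟪z, c 3⟫ = -(z 1) := by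
    intro z; rw [hc3, EuclideanSpace.inner_single_right]; simp
  -- membership in the scaled balls
  have hball : ∀ (σ : ℝ), σ = 1 ∨ σ = -1 → ∀ (i : Fin 2) (z : EuclideanSpace ℝ (Fin 2)),
      z ∈ ball (α • EuclideanSpace.single i σ) α ↔ ‖z‖^2 < 2*α*(σ * z i) := by
    intro σ hσ i z
    have hσabs : |σ| = 1 := by rcases hσ with rfl | rfl <;> norm_num
    have h1 : ‖α • EuclideanSpace.single i σ‖ = α := by
      rw [norm_smul, EuclideanSpace.norm_single, Real.norm_eq_abs, Real.norm_eq_abs, hσabs,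
        abs_of_pos hα0, mul_one]
    have h2 : ⟪z, (EuclideanSpace.single i σ : EuclideanSpace ℝ (Fin 2))⟫ = σ * z i := by
      rw [EuclideanSpace.inner_single_right]; simp
    have h3 := mem_ball_through_zero (α • EuclideanSpace.single i σ) z
    rw [h1] at h3
    rw [h3, real_inner_smul_right, h2]
    constructor <;> intro h <;> linarith
  -- scaled I2 membership
  have hI2mem : ∀ z : EuclideanSpace ℝ (Fin 2), z ∈ α • I2 ↔
      {i : Fin 4 | ‖z‖^2 < 2*α*⟪z, c i⟫}.ncard = 2 := by
    intro z
    rw [Set.mem_smul_set_iff_inv_smul_mem₀ hαne _ _, hI2, Set.mem_setOf_eq]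
    have hmul : α * α⁻¹ = 1 := mul_inv_cancel₀ hαne
    have hset : {i : Fin 4 | α⁻¹ • z ∈ ball (c i) 1} = {i : Fin 4 | ‖z‖^2 < 2*α*⟪z, c i⟫} := by
      ext i
      have hci : ‖c i‖ = 1 := by
        rcases hfin i with rfl | rfl | rfl | rfl <;> simp [hc0, hc1, hc2, hc3]
      simp only [Set.mem_setOf_eq]
      have h3 := mem_ball_through_zero (c i) (α⁻¹ • z)
      rw [hci] at h3
      rw [h3, norm_smul, real_inner_smul_left, mul_pow, Real.norm_eq_abs, sq_abs]
      constructor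
      · intro h
        have h' := mul_lt_mul_of_pos_left h (show (0:ℝ) < α^2 by positivity)
        calc ‖z‖^2 = α^2*(α⁻¹^2*‖z‖^2) := by
              linear_combination (-(‖z‖^2)*(α*α⁻¹+1)) * hmul
          _ < α^2*(2*(α⁻¹*⟪z, c i⟫)) := h'
          _ = 2*α*⟪z, c i⟫ := by linear_combination (2*α*⟪z, c i⟫) * hmul
      · intro h
        have h' := mul_lt_mul_of_pos_left h (show (0:ℝ) < α⁻¹^2 by
          exact pow_pos (inv_pos.2 hα0) 2)
        calc α⁻¹^2*‖z‖^2 < α⁻¹^2*(2*α*⟪z, c i⟫) := h'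
          _ = 2*(α⁻¹*⟪z, c i⟫) := by linear_combination (2*α⁻¹*⟪z, c i⟫) * hmul
    rw [hset]
  -- sign characterization
  have hI2iff : ∀ z : EuclideanSpace ℝ (Fin 2), z ∈ α • I2 ↔
      ((‖z‖^2 < 2*α*(z 0) ∨ ‖z‖^2 < 2*α*(-(z 0))) ∧
       (‖z‖^2 < 2*α*(z 1) ∨ ‖z‖^2 < 2*α*(-(z 1)))) := by
    intro z
    rw [hI2mem]
    have hz2 : (0:ℝ) ≤ ‖z‖^2 := sq_nonneg _
    constructor
    · intro h
      constructor
      · by_contra hno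
        push_neg at hno
        have hsub : ∀ k : Fin 4, ‖z‖^2 < 2*α*⟪z, c k⟫ → k = 2 ∨ k = 3 := by
          intro k hk
          rcases hfin k with rfl | rfl | rfl | rfl
          · rw [hip0 z] at hk; exact absurd hk (by linarith [hno.1])
          · rw [hip1 z] at hk; exact absurd hk (by linarith [hno.2])
          · exact Or.inl rfl
          · exact Or.inr rfl
        obtain ⟨h2m, h3m⟩ := pair_of_ncard h (by decide : (2:Fin 4) ≠ 3) hsub
        rw [hip2 z] at h2m
        rw [hip3 z] at h3m
        linarith
      · by_contra hno
        push_neg at hno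
        have hsub : ∀ k : Fin 4, ‖z‖^2 < 2*α*⟪z, c k⟫ → k = 0 ∨ k = 1 := by
          intro k hk
          rcases hfin k with rfl | rfl | rfl | rfl
          · exact Or.inl rfl
          · exact Or.inr rfl
          · rw [hip2 z] at hk; exact absurd hk (by linarith [hno.1])
          · rw [hip3 z] at hk; exact absurd hk (by linarith [hno.2])
        obtain ⟨h0m, h1m⟩ := pair_of_ncard h (by decide : (0:Fin 4) ≠ 1) hsub
        rw [hip0 z] at h0m
        rw [hip1 z] at h1m
        linarith
    · rintro ⟨h01, h23⟩
      rcases h01 with h0 | h1 <;> rcases h23 with h2 | h3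
      · refine ncard_pair_of (by decide : (0:Fin 4) ≠ 2) ?_ ?_ ?_
        · show ‖z‖^2 < 2*α*⟪z, c 0⟫; rw [hip0 z]; exact h0
        · show ‖z‖^2 < 2*α*⟪z, c 2⟫; rw [hip2 z]; exact h2
        · intro k hk
          rcases hfin k with rfl | rfl | rfl | rfl
          · exact Or.inl rfl
          · rw [hip1 z] at hk; linarith
          · exact Or.inr rfl
          · rw [hip3 z] at hk; linarith
      · refine ncard_pair_of (by decide : (0:Fin 4) ≠ 3) ?_ ?_ ?_
        · show ‖z‖^2 < 2*α*⟪z, c 0⟫; rw [hip0 z]; exact h0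
        · show ‖z‖^2 < 2*α*⟪z, c 3⟫; rw [hip3 z]; exact h3
        · intro k hk
          rcases hfin k with rfl | rfl | rfl | rfl
          · exact Or.inl rfl
          · rw [hip1 z] at hk; linarith
          · rw [hip2 z] at hk; linarith
          · exact Or.inr rfl
      · refine ncard_pair_of (by decide : (1:Fin 4) ≠ 2) ?_ ?_ ?_
        · show ‖z‖^2 < 2*α*⟪z, c 1⟫; rw [hip1 z]; linarith
        · show ‖z‖^2 < 2*α*⟪z, c 2⟫; rw [hip2 z]; exact h2
        · intro k hk
          rcases hfin k with rfl | rfl | rfl | rfl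
          · rw [hip0 z] at hk; linarith
          · exact Or.inl rfl
          · exact Or.inr rfl
          · rw [hip3 z] at hk; linarith
      · refine ncard_pair_of (by decide : (1:Fin 4) ≠ 3) ?_ ?_ ?_
        · show ‖z‖^2 < 2*α*⟪z, c 1⟫; rw [hip1 z]; linarith
        · show ‖z‖^2 < 2*α*⟪z, c 3⟫; rw [hip3 z]; linarith
        · intro k hk
          rcases hfin k with rfl | rfl | rfl | rfl
          · rw [hip0 z] at hk; linarith
          · exact Or.inl rfl
          · rw [hip2 z] at hk; linarith
          · exact Or.inr rfl
  -- αF as a union of balls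
  have hαF : α • F = ⋃ i, ball (α • c i) α := by
    rw [hF, Set.smul_set_iUnion]
    refine Set.iUnion_congr fun i => ?_
    rw [_root_.smul_ball hαne, Real.norm_eq_abs, abs_of_pos hα0, mul_one]
  -- extraction of witnesses from the four lens components
  have extract : ∀ σ τ : ℝ, σ = 1 ∨ σ = -1 → τ = 1 ∨ τ = -1 →
      ∃ s ∈ S, s ∈ α • F ∧ ‖s‖^2 < 2*α*(σ * s 0) ∧ ‖s‖^2 < 2*α*(τ * s 1) := by
    intro σ τ hσ hτ
    have hσ2 : σ * σ = 1 := by rcases hσ with rfl | rfl <;> norm_num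
    have hτ2 : τ * τ = 1 := by rcases hτ with rfl | rfl <;> norm_num
    have hσ' : -σ = 1 ∨ -σ = -1 := by rcases hσ with rfl | rfl <;> norm_num
    have hτ' : -τ = 1 ∨ -τ = -1 := by rcases hτ with rfl | rfl <;> norm_num
    set U : Set (EuclideanSpace ℝ (Fin 2)) :=
      ball (α • EuclideanSpace.single 0 σ) α ∩ ball (α • EuclideanSpace.single 1 τ) α with hUdef
    set V : Set (EuclideanSpace ℝ (Fin 2)) :=
      ball (α • EuclideanSpace.single 0 (-σ)) α ∪ ball (α • EuclideanSpace.single 1 (-τ)) α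
      with hVdef
    set w : EuclideanSpace ℝ (Fin 2) :=
      EuclideanSpace.single 0 (α*σ/2) + EuclideanSpace.single 1 (α*τ/2) with hwdef
    have hw0 : w 0 = α*σ/2 := by
      simp [hwdef, EuclideanSpace.single_apply, PiLp.add_apply]
    have hw1 : w 1 = α*τ/2 := by
      simp [hwdef, EuclideanSpace.single_apply, PiLp.add_apply]
    have hwU : w ∈ U := by
      have e1 : (α*σ/2)^2 + (α*τ/2)^2 = α^2/2 := by
        linear_combination (α^2/4) * hσ2 + (α^2/4) * hτ2
      have hαsq : (0:ℝ) < α^2 := pow_pos hα0 2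
      constructor
      · rw [hball σ hσ 0 w, normsq2, hw0, hw1, e1]
        have e2 : 2*α*(σ*(α*σ/2)) = α^2 := by linear_combination α^2 * hσ2
        rw [e2]; linarith
      · rw [hball τ hτ 1 w, normsq2, hw0, hw1, e1]
        have e2 : 2*α*(τ*(α*τ/2)) = α^2 := by linear_combination α^2 * hτ2
        rw [e2]; linarith
    have h0w := hwU.1
    rw [hball σ hσ 0 w] at h0w
    have h1w := hwU.2
    rw [hball τ hτ 1 w] at h1w
    have hwI2 : w ∈ α • I2 := by
      rw [hI2iff]
      constructor
      · rcases hσ with hσe | hσe <;> rw [hσe] at h0w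
        · exact Or.inl (by linarith)
        · exact Or.inr (by linarith)
      · rcases hτ with hτe | hτe <;> rw [hτe] at h1w
        · exact Or.inl (by linarith)
        · exact Or.inr (by linarith)
    obtain ⟨s, hsS, hsK⟩ := hhit w hwI2
    have hdisj : Disjoint U V := by
      rw [Set.disjoint_left]
      intro z hzU hzV
      have ha := hzU.1
      rw [hball σ hσ 0 z] at ha
      have hb := hzU.2
      rw [hball τ hτ 1 z] at hb
      have hz2 : (0:ℝ) ≤ ‖z‖^2 := sq_nonneg _
      rcases hzV with hz | hz
      · rw [hball (-σ) hσ' 0 z] at hz; linarith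
      · rw [hball (-τ) hτ' 1 z] at hz; linarith
    have hcover : α • I2 ⊆ U ∪ V := by
      intro z hz
      rw [hI2iff] at hz
      by_cases hzu : z ∈ U
      · exact Or.inl hzu
      right
      rw [hUdef, Set.mem_inter_iff, hball σ hσ 0 z, hball τ hτ 1 z] at hzu
      rcases not_and_or.1 hzu with h | h
      · refine Set.mem_union_left _ ?_
        rw [hball (-σ) hσ' 0 z]
        rcases hσ with hσe | hσe <;> rw [hσe] at h ⊢
        · rcases hz.1 with h' | h'
          · exact absurd (by linarith : ‖z‖^2 < 2*α*(1*z 0)) h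
          · linarith
        · rcases hz.1 with h' | h'
          · linarith
          · exact absurd (by linarith : ‖z‖^2 < 2*α*(-1*z 0)) h
      · refine Set.mem_union_right _ ?_
        rw [hball (-τ) hτ' 1 z]
        rcases hτ with hτe | hτe <;> rw [hτe] at h ⊢
        · rcases hz.2 with h' | h'
          · exact absurd (by linarith : ‖z‖^2 < 2*α*(1*z 1)) h
          · linarith
        · rcases hz.2 with h' | h'
          · linarith
          · exact absurd (by linarith : ‖z‖^2 < 2*α*(-1*z 1)) h
    have hKsub : connectedComponentIn (α • I2) w ⊆ U :=
      isPreconnected_connectedComponentIn.subset_left_of_subset_union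
        (isOpen_ball.inter isOpen_ball) (isOpen_ball.union isOpen_ball) hdisj
        ((connectedComponentIn_subset _ _).trans hcover)
        ⟨w, mem_connectedComponentIn hwI2, hwU⟩
    have hsU := hKsub hsK
    have hsF : s ∈ α • F := by
      rw [hαF, Set.mem_iUnion]
      have hb := hsU.1
      rcases hσ with hσe | hσe <;> rw [hσe] at hb
      · exact ⟨0, by rw [hc0]; exact hb⟩
      · exact ⟨1, by rw [hc1]; exact hb⟩
    refine ⟨s, hsS, hsF, ?_, ?_⟩
    · have hb := hsU.1; rwa [hball σ hσ 0 s] at hb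
    · have hb := hsU.2; rwa [hball τ hτ 1 s] at hb
  -- main quantitative bound
  have bound : ∀ y : EuclideanSpace ℝ (Fin 2), ∃ s ∈ S, s ∈ α • F ∧ 0 < ‖s‖^2 ∧
      ‖s‖^2 * (|y 0| + |y 1|) ≤ 2*α*(y 0 * s 0 + y 1 * s 1) := by
    intro y
    set σ : ℝ := if 0 ≤ y 0 then 1 else -1 with hσdef
    set τ : ℝ := if 0 ≤ y 1 then 1 else -1 with hτdef
    have hσ : σ = 1 ∨ σ = -1 := by
      rw [hσdef]; split_ifs <;> [exact Or.inl rfl; exact Or.inr rfl]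
    have hτ : τ = 1 ∨ τ = -1 := by
      rw [hτdef]; split_ifs <;> [exact Or.inl rfl; exact Or.inr rfl]
    have hσ2 : σ * σ = 1 := by rcases hσ with he | he <;> rw [he] <;> norm_num
    have hτ2 : τ * τ = 1 := by rcases hτ with he | he <;> rw [he] <;> norm_num
    have hσy : σ * y 0 = |y 0| := by
      rw [hσdef]; split_ifs with h
      · rw [abs_of_nonneg h, one_mul]
      · rw [abs_of_neg (not_le.1 h)]; ring
    have hτy : τ * y 1 = |y 1| := by
      rw [hτdef]; split_ifs with h
      · rw [abs_of_nonneg h, one_mul]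
      · rw [abs_of_neg (not_le.1 h)]; ring
    obtain ⟨s, hsS, hsF, h0, h1⟩ := extract σ τ hσ hτ
    have hs_ne : s ≠ 0 := by
      rintro rfl
      simp only [norm_zero] at h0
      have : ((0:EuclideanSpace ℝ (Fin 2)) 0 : ℝ) = 0 := rfl
      rw [this] at h0
      norm_num at h0
    have hMpos : 0 < ‖s‖^2 := pow_pos (norm_pos_iff.2 hs_ne) 2
    have e0 : 2*α*(y 0 * s 0) = (2*α*(σ * s 0)) * (σ * y 0) := by
      linear_combination (-(2*α*(y 0)*(s 0))) * hσ2
    have e1 : 2*α*(y 1 * s 1) = (2*α*(τ * s 1)) * (τ * y 1) := by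
      linear_combination (-(2*α*(y 1)*(s 1))) * hτ2
    have key0 : ‖s‖^2 * |y 0| ≤ 2*α*(y 0 * s 0) := by
      rw [e0, ← hσy]
      exact mul_le_mul_of_nonneg_right h0.le (by rw [hσy]; exact abs_nonneg _)
    have key1 : ‖s‖^2 * |y 1| ≤ 2*α*(y 1 * s 1) := by
      rw [e1, ← hτy]
      exact mul_le_mul_of_nonneg_right h1.le (by rw [hτy]; exact abs_nonneg _)
    refine ⟨s, hsS, hsF, hMpos, by nlinarith [key0, key1]⟩
  constructor
  · -- boundedness
    refine (isBounded_closedBall (x := (0:EuclideanSpace ℝ (Fin 2))) (r := 2*α)).subset ?_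
    intro y hy
    rw [mem_closedBall_zero_iff]
    obtain ⟨s, hsS, hsF, hMpos, hkey⟩ := bound y
    have hyH : y ∈ H s := Set.mem_iInter₂.1 hy s hsS
    rw [hH s, Set.mem_setOf_eq, inner_sub_left, real_inner_self_eq_norm_sq, inner2] at hyH
    have hsum : |y 0| + |y 1| ≤ 2*α := by
      have h2 : 2*α*(y 0 * s 0 + y 1 * s 1) ≤ 2*α*‖s‖^2 :=
        mul_le_mul_of_nonneg_left (by linarith) (by linarith)
      nlinarith [hkey.trans h2, hMpos]
    nlinarith [norm_nonneg y, abs_nonneg (y 0), abs_nonneg (y 1), sq_abs (y 0), sq_abs (y 1),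
      hsum, normsq2 y, mul_nonneg (abs_nonneg (y 0)) (abs_nonneg (y 1))]
  · -- edge bound
    intro x hxS hne
    by_contra hxF
    have hxne : x ≠ 0 := fun h => hS0 (h ▸ hxS)
    have hN : 0 < ‖x‖^2 := pow_pos (norm_pos_iff.2 hxne) 2
    rw [hαF] at hxF
    have hxi : ∀ i : Fin 4, 2*α*⟪x, c i⟫ ≤ ‖x‖^2 := by
      intro i
      by_contra hlt
      push_neg at hlt
      refine hxF (Set.mem_iUnion.2 ⟨i, ?_⟩)
      rcases hfin i with rfl | rfl | rfl | rfl
      · rw [hip0 x] at hlt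
        rw [hc0, hball 1 (Or.inl rfl) 0 x]
        linarith
      · rw [hip1 x] at hlt
        rw [hc1, hball (-1) (Or.inr rfl) 0 x]
        linarith
      · rw [hip2 x] at hlt
        rw [hc2, hball 1 (Or.inl rfl) 1 x]
        linarith
      · rw [hip3 x] at hlt
        rw [hc3, hball (-1) (Or.inr rfl) 1 x]
        linarith
    have hx0 : 2*α*|x 0| ≤ ‖x‖^2 := by
      have ha := hxi 0; rw [hip0 x] at ha
      have hb := hxi 1; rw [hip1 x] at hb
      rcases abs_cases (x 0) with ⟨h, _⟩ | ⟨h, _⟩ <;> rw [h] <;> linarith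
    have hx1 : 2*α*|x 1| ≤ ‖x‖^2 := by
      have ha := hxi 2; rw [hip2 x] at ha
      have hb := hxi 3; rw [hip3 x] at hb
      rcases abs_cases (x 1) with ⟨h, _⟩ | ⟨h, _⟩ <;> rw [h] <;> linarith
    have hsub2 : (⋂ x' ∈ S, H x') ⊆ ⋂ x' ∈ S \ {x}, H x' := fun y hy =>
      Set.mem_iInter₂.2 fun z hz => Set.mem_iInter₂.1 hy z hz.1
    have hnsub : ¬ (⋂ x' ∈ S \ {x}, H x') ⊆ (⋂ x' ∈ S, H x') := fun h =>
      hne (Set.Subset.antisymm h hsub2)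
    obtain ⟨y, hy1, hy2⟩ := Set.not_subset.1 hnsub
    have hyHx : y ∉ H x := by
      intro hyx
      refine hy2 (Set.mem_iInter₂.2 fun z hz => ?_)
      by_cases hzx : z = x
      · exact hzx ▸ hyx
      · exact Set.mem_iInter₂.1 hy1 z ⟨hz, hzx⟩
    rw [hH x, Set.mem_setOf_eq, not_le, inner_sub_left, real_inner_self_eq_norm_sq, inner2]
      at hyHx
    obtain ⟨s, hsS, hsF, hMpos, hkey⟩ := bound y
    have hsx : s ≠ x := by
      rintro rfl
      rw [hαF] at hsF
      exact hxF hsF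
    have hyHs : y ∈ H s := Set.mem_iInter₂.1 hy1 s ⟨hsS, hsx⟩
    rw [hH s, Set.mem_setOf_eq, inner_sub_left, real_inner_self_eq_norm_sq, inner2] at hyHs
    have hsum : |y 0| + |y 1| ≤ 2*α := by
      have h2 : 2*α*(y 0 * s 0 + y 1 * s 1) ≤ 2*α*‖s‖^2 :=
        mul_le_mul_of_nonneg_left (by linarith) (by linarith)
      nlinarith [hkey.trans h2, hMpos]
    have hy0x : y 0 * x 0 ≤ |y 0| * |x 0| := by rw [← abs_mul]; exact le_abs_self _
    have hy1x : y 1 * x 1 ≤ |y 1| * |x 1| := by rw [← abs_mul]; exact le_abs_self _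
    have e1 : 2*α*(y 0 * x 0) ≤ |y 0| * ‖x‖^2 :=
      calc 2*α*(y 0 * x 0) ≤ 2*α*(|y 0| * |x 0|) :=
            mul_le_mul_of_nonneg_left hy0x (by linarith)
        _ = |y 0| * (2*α*|x 0|) := by ring
        _ ≤ |y 0| * ‖x‖^2 := mul_le_mul_of_nonneg_left hx0 (abs_nonneg _)
    have e2 : 2*α*(y 1 * x 1) ≤ |y 1| * ‖x‖^2 :=
      calc 2*α*(y 1 * x 1) ≤ 2*α*(|y 1| * |x 1|) :=
            mul_le_mul_of_nonneg_left hy1x (by linarith)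
        _ = |y 1| * (2*α*|x 1|) := by ring
        _ ≤ |y 1| * ‖x‖^2 := mul_le_mul_of_nonneg_left hx1 (abs_nonneg _)
    have e3 : (|y 0| + |y 1|) * ‖x‖^2 ≤ 2*α*‖x‖^2 :=
      mul_le_mul_of_nonneg_right hsum (le_of_lt hN)
    have e4 : 2*α*‖x‖^2 < 2*α*(y 0 * x 0 + y 1 * x 1) :=
      mul_lt_mul_of_pos_left (by linarith) (by linarith)
    linarith
end
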